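/- For any sequential plan π = ⟨a_1,...,a_m⟩ of ground actions over objects Ω = {0,...,N-1}, with each action of arity at most K, there exists an equivalent program in the index-based language (with K index variables z_1,...,z_K, each initialized to 0 and ranging over [0,N), and instructions z++ / z-- / apply a(z_{i1},...,z_{ik})) whose execution produces exactly the sequence of ground actions π. Hence the index-based representation preserves the space of sequential plans. -/

import Mathlib

/-- Instructions of the index-based plan language: increment/decrement one of the
`K` index variables (each ranging over `Fin N`), or apply an action scheme with
its arguments instantiated by index variables. -/
inductive Instr (A : Type) (arity : A → ℕ) (K N : ℕ) : Type where
  | inc (i : Fin K)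
  | dec (i : Fin K)
  | apply (a : A) (args : Fin (arity a) → Fin K)

/-- A ground action: an action scheme instantiated with objects. -/
abbrev GroundAction (A : Type) (arity : A → ℕ) (N : ℕ) :=
  (a : A) × (Fin (arity a) → Fin N)

/-- Increment a `Fin N` value, capped at `N-1`. -/
def bump {N : ℕ} (x : Fin N) : Fin N :=
  if h : x.val + 1 < N then ⟨x.val + 1, h⟩ else x

/-- Decrement a `Fin N` value, floored at `0`. -/
def drop' {N : ℕ} (x : Fin N) : Fin N :=
  ⟨x.val - 1, Nat.lt_of_le_of_lt (Nat.sub_le _ _) x.isLt⟩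

/-- Executing a program (a list of instructions) from an index valuation
deterministically yields the list of emitted ground actions:
`Apply` emits the action instantiated by the current index values,
`Inc`/`Dec` emit nothing. -/
def run {A : Type} {arity : A → ℕ} {K N : ℕ} :
    List (Instr A arity K N) → (Fin K → Fin N) → List (GroundAction A arity N)
  | [], _ => []
  | .inc i :: rest, v => run rest (Function.update v i (bump (v i)))
  | .dec i :: rest, v => run rest (Function.update v i (drop' (v i)))
  | .apply a args :: rest, v => ⟨a, fun j => v (args j)⟩ :: run rest v

section Aux
variable {A : Type} {arity : A → ℕ} {K N : ℕ}

lemma run_dec_to_zero (hN : 0 < N) :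
    ∀ (n : ℕ) (v : Fin K → Fin N) (i : Fin K), (v i).val = n →
    ∀ rest : List (Instr A arity K N), run (List.replicate n (Instr.dec i) ++ rest) v
      = run rest (Function.update v i ⟨0, hN⟩) := by
  intro n
  induction n with
  | zero =>
    intro v i h rest
    simp only [List.replicate_zero, List.nil_append]
    congr 1
    funext k
    by_cases hk : k = i
    · subst hk; simp [Function.update_self, Fin.ext_iff, h]
    · simp [Function.update_of_ne hk]
  | succ m ih =>
    intro v i h rest
    simp only [List.replicate_succ, List.cons_append, run]
    have h2 : ((Function.update v i (drop' (v i))) i).val = m := by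
      simp [Function.update_self, drop', h]
    rw [ih _ i h2]
    congr 1
    funext k
    by_cases hk : k = i
    · subst hk; simp [Function.update_self]
    · simp [Function.update_of_ne hk]

lemma run_inc (hN : 0 < N) :
    ∀ (m : ℕ) (v : Fin K → Fin N) (i : Fin K) (h : (v i).val + m < N)
      (rest : List (Instr A arity K N)),
    run (List.replicate m (Instr.inc i) ++ rest) v
      = run rest (Function.update v i ⟨(v i).val + m, h⟩) := by
  intro m
  induction m with
  | zero =>
    intro v i h rest
    simp only [List.replicate_zero, List.nil_append]
    congr 1
    funext k
    by_cases hk : k = i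
    · subst hk; simp [Function.update_self, Fin.ext_iff]
    · simp [Function.update_of_ne hk]
  | succ m ih =>
    intro v i h rest
    simp only [List.replicate_succ, List.cons_append, run]
    have h1 : (v i).val + 1 < N := by omega
    have hb : bump (v i) = ⟨(v i).val + 1, h1⟩ := by simp [bump, h1]
    set v' := Function.update v i (bump (v i)) with hv'
    have hvi : (v' i).val = (v i).val + 1 := by
      simp [hv', Function.update_self, hb]
    have h2 : (v' i).val + m < N := by omega
    rw [ih v' i h2 rest]
    congr 1
    funext k
    by_cases hk : k = i
    · subst hk
      simp only [Function.update_self, Fin.ext_iff]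
      omega
    · simp [hv', Function.update_of_ne hk]

lemma set_one (hN : 0 < N) (v : Fin K → Fin N) (i : Fin K) (t : Fin N) :
    ∃ prog : List (Instr A arity K N), ∀ rest,
      run (prog ++ rest) v = run rest (Function.update v i t) := by
  refine ⟨List.replicate (v i).val (Instr.dec i) ++ List.replicate t.val (Instr.inc i), ?_⟩
  intro rest
  rw [List.append_assoc, run_dec_to_zero hN _ v i rfl]
  have h0 : ((Function.update v i (⟨0, hN⟩ : Fin N)) i).val = 0 := by
    simp [Function.update_self]
  have ht : ((Function.update v i (⟨0, hN⟩ : Fin N)) i).val + t.val < N := by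
    rw [h0]; simpa using t.isLt
  rw [run_inc hN t.val _ i ht rest]
  congr 1
  funext k
  by_cases hk : k = i
  · subst hk; simp [Function.update_self, Fin.ext_iff, h0]
  · simp [Function.update_of_ne hk]

lemma set_list (hN : 0 < N) (w : Fin K → Fin N) :
    ∀ (l : List (Fin K)), l.Nodup → ∀ (v : Fin K → Fin N),
    ∃ prog : List (Instr A arity K N), ∀ rest,
      run (prog ++ rest) v = run rest (fun k => if k ∈ l then w k else v k) := by
  intro l
  induction l with
  | nil => intro _ v; exact ⟨[], fun rest => by simp⟩
  | cons i tl ih =>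
    intro hnd v
    obtain ⟨p1, hp1⟩ := set_one (A := A) (arity := arity) hN v i (w i)
    obtain ⟨p2, hp2⟩ := ih hnd.of_cons (Function.update v i (w i))
    refine ⟨p1 ++ p2, fun rest => ?_⟩
    rw [List.append_assoc, hp1, hp2]
    congr 1
    funext k
    by_cases hk : k = i
    · subst hk
      have : k ∉ tl := (List.nodup_cons.mp hnd).1
      simp [this, Function.update_self]
    · by_cases hm : k ∈ tl <;> simp [hk, hm, Function.update_of_ne hk]

lemma set_all (hN : 0 < N) (v w : Fin K → Fin N) :
    ∃ prog : List (Instr A arity K N), ∀ rest,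
      run (prog ++ rest) v = run rest w := by
  obtain ⟨prog, hp⟩ := set_list (A := A) (arity := arity) hN w (List.finRange K)
    (List.nodup_finRange K) v
  exact ⟨prog, fun rest => by rw [hp]; congr 1; funext k; simp [List.mem_finRange]⟩

end Aux

/-- For any sequential plan `π` of ground actions over `N > 0` objects, with each
action of arity at most `K`, there is a program in the index-based language whose
execution from the all-zero index valuation emits exactly `π`.  Hence the
index-based representation preserves the space of sequential plans. -/
theorem index_programs_preserve_sequential_plans
    (A : Type) (arity : A → ℕ) (K N : ℕ) (hN : 0 < N)
    (harity : ∀ a : A, arity a ≤ K)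
    (π : List (GroundAction A arity N)) :
    ∃ prog : List (Instr A arity K N),
      run prog (fun _ => ⟨0, hN⟩) = π := by
  suffices h : ∀ (π : List (GroundAction A arity N)) (v : Fin K → Fin N),
      ∃ prog : List (Instr A arity K N), run prog v = π from h π _
  intro π
  induction π with
  | nil => exact fun v => ⟨[], rfl⟩
  | cons ga tl ih =>
    intro v
    obtain ⟨a, args⟩ := ga
    set w : Fin K → Fin N := fun k =>
      if h : k.val < arity a then args ⟨k.val, h⟩ else ⟨0, hN⟩ with hw
    obtain ⟨p1, hp1⟩ := set_all (A := A) (arity := arity) hN v w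
    obtain ⟨p2, hp2⟩ := ih w
    refine ⟨p1 ++ (Instr.apply a (fun j => ⟨j.val, lt_of_lt_of_le j.isLt (harity a)⟩) :: p2),
      ?_⟩
    rw [hp1, run, hp2]
    congr 1
    simp only [Sigma.mk.inj_iff, heq_eq_eq, true_and]
    funext j
    simp [hw, j.isLt]
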